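/- Let Ω, Ω* be compact metric spaces with Ω nonempty, let c : Ω × Ω* → ℝ be continuous, and let ν be a Borel probability measure on Ω*. Define K₀ : C(Ω, ℝ) → ℝ by K₀(φ) = ∫_{Ω*} φ^c dν, where φ^c(y) = ⨆_{x ∈ Ω} (φ(x) − c(x, y)) is the c-transform. Then: (1) K₀ is submodular, i.e. K₀(φ₁ ⊓ φ₂) + K₀(φ₁ ⊔ φ₂) ≤ K₀(φ₁) + K₀(φ₂) for all φ₁, φ₂ ∈ C(Ω, ℝ), where ⊓, ⊔ are the pointwise min and max; (2) K₀ is convex; (3) K₀ is 1-Lipschitz for the supremum norm: |K₀(φ₁) − K₀(φ₂)| ≤ ‖φ₁ − φ₂‖_∞. -/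

import Mathlib

open MeasureTheory

section Aux

variable {Ω Ωs : Type*} [MetricSpace Ω] [CompactSpace Ω] [Nonempty Ω]
    [MetricSpace Ωs] [CompactSpace Ωs] [MeasurableSpace Ωs] [BorelSpace Ωs]
    (c : Ω × Ωs → ℝ)

lemma ctrans_bdd (φ : C(Ω, ℝ)) (hc : Continuous c) (y : Ωs) :
    BddAbove (Set.range fun x : Ω => φ x - c (x, y)) :=
  (isCompact_range (by fun_prop)).bddAbove

lemma ctrans_continuous (φ : C(Ω, ℝ)) (hc : Continuous c) :
    Continuous fun y : Ωs => ⨆ x : Ω, (φ x - c (x, y)) := by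
  have h : Continuous fun y : Ωs => sSup ((fun x : Ω => φ x - c (x, y)) '' Set.univ) := by
    apply IsCompact.continuous_sSup isCompact_univ
    fun_prop
  convert h using 2 with y
  rw [Set.image_univ, iSup]

lemma ctrans_integrable (φ : C(Ω, ℝ)) (hc : Continuous c) (ν : Measure Ωs)
    [IsProbabilityMeasure ν] :
    Integrable (fun y : Ωs => ⨆ x : Ω, (φ x - c (x, y))) ν :=
  (ctrans_continuous c φ hc).integrable_of_hasCompactSupport
    (HasCompactSupport.of_compactSpace _)

end Aux

/-- The dual optimal-transport functional
`K₀(φ) = ∫ φ^c dν`, where `φ^c(y) = ⨆ x, (φ x − c (x, y))` is the c-transform,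
is submodular, convex and 1-Lipschitz on `C(Ω, ℝ)`. -/
theorem cTransform_functional_submodular_convex_lipschitz
    {Ω Ωs : Type*} [MetricSpace Ω] [CompactSpace Ω] [Nonempty Ω]
    [MetricSpace Ωs] [CompactSpace Ωs] [MeasurableSpace Ωs] [BorelSpace Ωs]
    (c : Ω × Ωs → ℝ) (hc : Continuous c)
    (ν : Measure Ωs) [IsProbabilityMeasure ν]
    (K₀ : C(Ω, ℝ) → ℝ)
    (hK₀ : ∀ φ : C(Ω, ℝ), K₀ φ = ∫ y, (⨆ x : Ω, (φ x - c (x, y))) ∂ν) :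
    (∀ φ₁ φ₂ : C(Ω, ℝ), K₀ (φ₁ ⊓ φ₂) + K₀ (φ₁ ⊔ φ₂) ≤ K₀ φ₁ + K₀ φ₂) ∧
      ConvexOn ℝ Set.univ K₀ ∧
      (∀ φ₁ φ₂ : C(Ω, ℝ), |K₀ φ₁ - K₀ φ₂| ≤ ‖φ₁ - φ₂‖) := by
  set F : C(Ω, ℝ) → Ωs → ℝ := fun φ y => ⨆ x : Ω, (φ x - c (x, y)) with hF
  have hint : ∀ φ : C(Ω, ℝ), Integrable (F φ) ν := fun φ => ctrans_integrable c φ hc ν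
  have hFle : ∀ (φ₁ φ₂ : C(Ω, ℝ)) (y : Ωs), F φ₁ y ≤ F φ₂ y + ‖φ₁ - φ₂‖ := by
    intro φ₁ φ₂ y
    apply ciSup_le
    intro x
    have h1 : φ₁ x - φ₂ x ≤ ‖φ₁ - φ₂‖ := by
      calc φ₁ x - φ₂ x ≤ |φ₁ x - φ₂ x| := le_abs_self _
      _ = ‖(φ₁ - φ₂) x‖ := by simp [Real.norm_eq_abs]
      _ ≤ ‖φ₁ - φ₂‖ := ContinuousMap.norm_coe_le_norm _ x
    have h2 : φ₂ x - c (x, y) ≤ F φ₂ y := le_ciSup (ctrans_bdd c φ₂ hc y) x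
    linarith
  have hFmono : ∀ (φ₁ φ₂ : C(Ω, ℝ)), (∀ x, φ₁ x ≤ φ₂ x) → ∀ y, F φ₁ y ≤ F φ₂ y := by
    intro φ₁ φ₂ h y
    exact ciSup_mono (ctrans_bdd c φ₂ hc y) fun x => by linarith [h x]
  refine ⟨?_, ?_, ?_⟩
  · -- submodularity
    intro φ₁ φ₂
    rw [hK₀, hK₀, hK₀, hK₀, ← integral_add (hint _) (hint _), ← integral_add (hint _) (hint _)]
    apply integral_mono ((hint _).add (hint _)) ((hint _).add (hint _))
    intro y
    have hmin : F (φ₁ ⊓ φ₂) y ≤ min (F φ₁ y) (F φ₂ y) := by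
      refine le_min (hFmono _ _ (fun x => ?_) y) (hFmono _ _ (fun x => ?_) y) <;>
        simp [min_le_left, min_le_right]
    have hmax : F (φ₁ ⊔ φ₂) y ≤ max (F φ₁ y) (F φ₂ y) := by
      apply ciSup_le
      intro x
      rcases le_total (φ₁ x) (φ₂ x) with h | h
      · exact le_max_of_le_right (by
          have : (φ₁ ⊔ φ₂) x = φ₂ x := by simp [sup_of_le_right h, max_eq_right h]
          rw [show ((φ₁ ⊔ φ₂) x - c (x, y)) = φ₂ x - c (x, y) by rw [this]]
          exact le_ciSup (ctrans_bdd c φ₂ hc y) x)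
      · exact le_max_of_le_left (by
          have : (φ₁ ⊔ φ₂) x = φ₁ x := by simp [sup_of_le_left h, max_eq_left h]
          rw [show ((φ₁ ⊔ φ₂) x - c (x, y)) = φ₁ x - c (x, y) by rw [this]]
          exact le_ciSup (ctrans_bdd c φ₁ hc y) x)
    have := min_add_max (F φ₁ y) (F φ₂ y)
    simp only [Pi.add_apply]
    linarith
  · -- convexity
    refine ⟨convex_univ, ?_⟩
    intro φ₁ _ φ₂ _ a b ha hb hab
    have hpt : ∀ y, F (a • φ₁ + b • φ₂) y ≤ a * F φ₁ y + b * F φ₂ y := by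
      intro y
      apply ciSup_le
      intro x
      have h1 : φ₁ x - c (x, y) ≤ F φ₁ y := le_ciSup (ctrans_bdd c φ₁ hc y) x
      have h2 : φ₂ x - c (x, y) ≤ F φ₂ y := le_ciSup (ctrans_bdd c φ₂ hc y) x
      have hx : (a • φ₁ + b • φ₂) x = a * φ₁ x + b * φ₂ x := by
        simp [ContinuousMap.add_apply, ContinuousMap.smul_apply, smul_eq_mul]
      rw [hx]
      have hcab : (a + b) * c (x, y) = c (x, y) := by rw [hab, one_mul]
      have p1 := mul_le_mul_of_nonneg_left h1 ha
      have p2 := mul_le_mul_of_nonneg_left h2 hb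
      ring_nf at p1 p2 hcab ⊢
      nlinarith [p1, p2, hcab]
    rw [hK₀, hK₀, hK₀]
    calc (∫ y, F (a • φ₁ + b • φ₂) y ∂ν)
        ≤ ∫ y, (a * F φ₁ y + b * F φ₂ y) ∂ν := by
          exact integral_mono (hint _)
            (((hint φ₁).const_mul a).add ((hint φ₂).const_mul b)) hpt
      _ = a * ∫ y, F φ₁ y ∂ν + b * ∫ y, F φ₂ y ∂ν := by
          rw [integral_add ((hint φ₁).const_mul a) ((hint φ₂).const_mul b),
            integral_const_mul, integral_const_mul]
      _ = a • (∫ y, F φ₁ y ∂ν) + b • (∫ y, F φ₂ y ∂ν) := by simp [smul_eq_mul]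
  · -- Lipschitz
    intro φ₁ φ₂
    have key : ∀ ψ₁ ψ₂ : C(Ω, ℝ), K₀ ψ₁ - K₀ ψ₂ ≤ ‖ψ₁ - ψ₂‖ := by
      intro ψ₁ ψ₂
      rw [hK₀, hK₀]
      have : ∫ y, F ψ₁ y ∂ν ≤ ∫ y, (F ψ₂ y + ‖ψ₁ - ψ₂‖) ∂ν :=
        integral_mono (hint _) ((hint _).add (integrable_const _)) fun y => hFle ψ₁ ψ₂ y
      rw [integral_add (hint _) (integrable_const _), integral_const] at this
      simp only [probReal_univ, measure_univ, one_smul, smul_eq_mul] at this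
      linarith
    rw [abs_sub_le_iff]
    constructor
    · exact key φ₁ φ₂
    · have := key φ₂ φ₁
      rwa [norm_sub_rev] at this
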